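/- Let H ∈ (1/2,1) and let V(s,t) := −2^{2H−1}(t^{2H} + s^{2H}) + (t+s)^{2H} + (t−s)^{2H} denote the incremental variance E|G^H(t)−G^H(s)|² of subfractional Brownian motion. Then for all 0 ≤ s ≤ t one has (2 − 2^{2H−1})(t−s)^{2H} ≤ V(s,t) ≤ (t−s)^{2H}; in particular subfractional Brownian motion satisfies condition (A) with constants C₁ = 2 − 2^{2H−1} and C₂ = 1. -/

import Mathlib

open Set

/-- Midpoint convexity of `x ^ p` for `p ≥ 1`. -/
lemma aux_convex {p u v : ℝ} (hp : 1 ≤ p) (hu : 0 ≤ u) (hv : 0 ≤ v) :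
    (u + v) ^ p ≤ 2 ^ (p - 1) * (u ^ p + v ^ p) := by
  have h := (convexOn_rpow hp).2 (mem_Ici.2 hu) (mem_Ici.2 hv)
      (by norm_num : (0:ℝ) ≤ 1/2) (by norm_num : (0:ℝ) ≤ 1/2) (by norm_num)
  simp only [smul_eq_mul] at h
  have h2 : (0:ℝ) < 2 ^ p := Real.rpow_pos_of_pos (by norm_num) p
  have key : ((u + v) / 2) ^ p ≤ (u ^ p + v ^ p) / 2 := by
    have : (1/2 : ℝ) * u + (1/2 : ℝ) * v = (u + v) / 2 := by ring
    rw [this] at h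
    linarith
  have hrw : (u + v) ^ p = 2 ^ p * ((u + v) / 2) ^ p := by
    rw [← Real.mul_rpow (by norm_num) (by positivity)]
    ring_nf
  have h2p : (2:ℝ) ^ (p - 1) = 2 ^ p / 2 := by
    rw [Real.rpow_sub (by norm_num), Real.rpow_one]
  rw [hrw, h2p]
  calc 2 ^ p * ((u + v) / 2) ^ p ≤ 2 ^ p * ((u ^ p + v ^ p) / 2) := by
        exact mul_le_mul_of_nonneg_left key h2.le
    _ = 2 ^ p / 2 * (u ^ p + v ^ p) := by ring

/-- Midpoint concavity of `x ^ p` for `0 ≤ p ≤ 1`. -/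
lemma aux_concave {p u v : ℝ} (hp0 : 0 ≤ p) (hp1 : p ≤ 1) (hu : 0 ≤ u) (hv : 0 ≤ v) :
    2 ^ (p - 1) * (u ^ p + v ^ p) ≤ (u + v) ^ p := by
  have h := (Real.concaveOn_rpow hp0 hp1).2 (mem_Ici.2 hu) (mem_Ici.2 hv)
      (by norm_num : (0:ℝ) ≤ 1/2) (by norm_num : (0:ℝ) ≤ 1/2) (by norm_num)
  simp only [smul_eq_mul] at h
  have h2 : (0:ℝ) < 2 ^ p := Real.rpow_pos_of_pos (by norm_num) p
  have key : (u ^ p + v ^ p) / 2 ≤ ((u + v) / 2) ^ p := by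
    have : (1/2 : ℝ) * u + (1/2 : ℝ) * v = (u + v) / 2 := by ring
    rw [this] at h
    linarith
  have hrw : (u + v) ^ p = 2 ^ p * ((u + v) / 2) ^ p := by
    rw [← Real.mul_rpow (by norm_num) (by positivity)]
    ring_nf
  have h2p : (2:ℝ) ^ (p - 1) = 2 ^ p / 2 := by
    rw [Real.rpow_sub (by norm_num), Real.rpow_one]
  rw [hrw, h2p]
  calc 2 ^ p / 2 * (u ^ p + v ^ p) = 2 ^ p * ((u ^ p + v ^ p) / 2) := by ring
    _ ≤ 2 ^ p * (((u + v) / 2) ^ p) := mul_le_mul_of_nonneg_left key h2.le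

/-- The incremental variance
`V(s,t) = -2^{2H-1}(t^{2H} + s^{2H}) + (t+s)^{2H} + (t-s)^{2H}` of subfractional
Brownian motion with `H ∈ (1/2,1)` satisfies, for `0 ≤ s ≤ t`,
`(2 - 2^{2H-1})(t-s)^{2H} ≤ V(s,t) ≤ (t-s)^{2H}`: condition (A) holds with
`C₁ = 2 - 2^{2H-1}` and `C₂ = 1`. -/
theorem subfractional_condition_A
    (H : ℝ) (hH : H ∈ Set.Ioo (1/2 : ℝ) 1)
    (V : ℝ → ℝ → ℝ)
    (hV : ∀ s t : ℝ, V s t =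
      -(2 : ℝ) ^ (2 * H - 1) * (t ^ (2 * H) + s ^ (2 * H))
        + (t + s) ^ (2 * H) + (t - s) ^ (2 * H))
    (s t : ℝ) (hs : 0 ≤ s) (hst : s ≤ t) :
    (2 - (2 : ℝ) ^ (2 * H - 1)) * (t - s) ^ (2 * H) ≤ V s t ∧
      V s t ≤ (t - s) ^ (2 * H) := by
  obtain ⟨hH1, hH2⟩ := hH
  set a := 2 * H with ha_def
  have ha1 : 1 < a := by rw [ha_def]; linarith
  have ha2 : a < 2 := by rw [ha_def]; linarith
  have ha1' : (1:ℝ) ≤ a := ha1.le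
  have ht0 : 0 ≤ t := hs.trans hst
  set r := t - s with hr_def
  have hr0 : 0 ≤ r := by rw [hr_def]; linarith
  -- the function g
  set g : ℝ → ℝ := fun x => (2 * x + r) ^ a - 2 ^ (a - 1) * ((x + r) ^ a + x ^ a) with hg_def
  -- derivative of g
  have hderiv : ∀ x : ℝ, HasDerivAt g
      (2 * (a * (2 * x + r) ^ (a - 1)) -
        2 ^ (a - 1) * (a * (x + r) ^ (a - 1) + a * x ^ (a - 1))) x := by
    intro x
    have h0 : HasDerivAt (fun x : ℝ => 2 * x + r) 2 x := by
      simpa using ((hasDerivAt_id x).const_mul 2).add_const r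
    have h1 : HasDerivAt (fun x : ℝ => (2 * x + r) ^ a)
        (2 * a * (2 * x + r) ^ (a - 1)) x := by
      simpa using h0.rpow_const (Or.inr ha1')
    have h2 : HasDerivAt (fun x : ℝ => (x + r) ^ a)
        (a * (x + r) ^ (a - 1)) x := by
      simpa using ((hasDerivAt_id x).add_const r).rpow_const (Or.inr ha1')
    have h3 : HasDerivAt (fun x : ℝ => x ^ a) (a * x ^ (a - 1)) x :=
      Real.hasDerivAt_rpow_const (Or.inr ha1')
    have := h1.sub (((h2.add h3)).const_mul (2 ^ (a - 1)))
    refine this.congr_deriv ?_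
    ring
  have hdiff : Differentiable ℝ g := fun x => (hderiv x).differentiableAt
  -- g is monotone on `Ici 0`
  have hmono : MonotoneOn g (Ici (0:ℝ)) := by
    apply monotoneOn_of_deriv_nonneg (convex_Ici 0) hdiff.continuous.continuousOn
      (hdiff.differentiableOn)
    intro x hx
    rw [interior_Ici] at hx
    have hx0 : 0 < x := hx
    rw [(hderiv x).deriv]
    have hconc := aux_concave (p := a - 1) (u := x) (v := x + r)
      (by linarith) (by linarith) hx0.le (by linarith)
    have hxx : x + (x + r) = 2 * x + r := by ring
    rw [hxx] at hconc
    have ha0 : (0:ℝ) < a := by linarith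
    have h2p : (2:ℝ) ^ (a - 1 - 1) = 2 ^ (a - 1) / 2 := by
      rw [Real.rpow_sub (by norm_num), Real.rpow_one]
    rw [h2p] at hconc
    nlinarith [Real.rpow_nonneg hx0.le (a - 1),
      Real.rpow_nonneg (show (0:ℝ) ≤ x + r by linarith) (a - 1),
      Real.rpow_pos_of_pos (show (0:ℝ) < 2 by norm_num) (a - 1)]
  -- value at 0
  have hg0 : g 0 = (1 - 2 ^ (a - 1)) * r ^ a := by
    simp only [hg_def]
    rw [Real.zero_rpow (by positivity : a ≠ 0)]
    ring_nf
  -- V = g s + r ^ a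
  have hVg : V s t = g s + r ^ a := by
    rw [hV s t, hg_def]
    have h1 : 2 * s + r = t + s := by rw [hr_def]; ring
    have h2 : s + r = t := by rw [hr_def]; ring
    simp only [h1, h2, ← hr_def]
    ring
  constructor
  · -- lower bound
    have := hmono (self_mem_Ici) (mem_Ici.2 hs) hs
    rw [hg0] at this
    rw [hVg]
    nlinarith
  · -- upper bound: g s ≤ 0
    have hconv := aux_convex (p := a) ha1' hs ht0
    have hts : s + t = 2 * s + r := by rw [hr_def]; ring
    have hst' : s + r = t := by rw [hr_def]; ring
    have hgle : g s ≤ 0 := by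
      simp only [hg_def, hst']
      have : (2 * s + r) ^ a ≤ 2 ^ (a - 1) * (s ^ a + t ^ a) := by
        rw [← hts]; exact hconv
      nlinarith
    rw [hVg]
    linarith
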